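/- Let I be a finite index set, let (f_α)_{α∈I} be ring homomorphisms A → B, let (n_α)_{α∈I} be integers, and let f : A → B be the ℚ-linear map f = Σ_{α∈I} n_α·f_α. Then for every a ∈ A the characteristic function of f is the rational function ∏_{α : n_α > 0}(1+f_α(a)T)^{n_α} / ∏_{α : n_α < 0}(1+f_α(a)T)^{−n_α}; precisely, in B[[T]] one has R(f,a) · ∏_{α : n_α < 0}(1+f_α(a)T)^{−n_α} = ∏_{α : n_α ≥ 0}(1+f_α(a)T)^{n_α}. -/

import Mathlib

open PowerSeries

noncomputable def logOneAdd {A : Type*} [CommRing A] [Algebra ℚ A] (a : A) : PowerSeries A :=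
  PowerSeries.mk fun k => ((-1 : ℚ) ^ (k + 1) / k) • a ^ k

noncomputable def mapCoeff {A B : Type*} [CommRing A] [CommRing B] [Algebra ℚ A] [Algebra ℚ B]
    (f : A →ₗ[ℚ] B) (p : PowerSeries A) : PowerSeries B :=
  PowerSeries.mk fun k => f (PowerSeries.coeff (R := A) k p)

noncomputable def expPS {B : Type*} [CommRing B] [Algebra ℚ B] (p : PowerSeries B) : PowerSeries B :=
  PowerSeries.mk fun k => ∑ m ∈ Finset.range (k + 1),
    ((m.factorial : ℚ)⁻¹) • PowerSeries.coeff (R := B) k (p ^ m)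

noncomputable def charFun {A B : Type*} [CommRing A] [CommRing B] [Algebra ℚ A] [Algebra ℚ B]
    (f : A →ₗ[ℚ] B) (a : A) : PowerSeries B :=
  expPS (mapCoeff f (logOneAdd a))

noncomputable def psi {A B : Type*} [CommRing A] [CommRing B] [Algebra ℚ A] [Algebra ℚ B]
    (f : A →ₗ[ℚ] B) (a : A) (k : ℕ) : B :=
  PowerSeries.coeff (R := B) k (charFun f a)

def IsNHom {A B : Type*} [CommRing A] [CommRing B] [Algebra ℚ A] [Algebra ℚ B]
    (f : A →ₗ[ℚ] B) (n : ℕ) : Prop :=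
  f 1 = n • (1 : B) ∧ ∀ k, n + 1 ≤ k → ∀ a : A, psi f a k = 0

noncomputable def frob {A B : Type*} [CommRing A] [CommRing B] [Algebra ℚ A] [Algebra ℚ B]
    (f : A →ₗ[ℚ] B) : (k : ℕ) → (Fin k → A) → B
  | 0, _ => 1
  | k + 1, a =>
      f (a (Fin.last k)) * frob f k (fun i => a i.castSucc)
        - ∑ i : Fin k, frob f k
            (Function.update (fun j : Fin k => a j.castSucc) i (a i.castSucc * a (Fin.last k)))

section Aux
variable {B : Type*} [CommRing B] [Algebra ℚ B]

theorem smul_cancel {n : ℕ} {x y : B} (h : x * ((n:B) + 1) = y * ((n:B) + 1)) :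
    x = y := by
  have h2 : ((n + 1 : ℚ)) • x = ((n + 1 : ℚ)) • y := by
    have hx : ∀ z : B, ((n + 1 : ℚ)) • z = z * ((n:B) + 1) := by
      intro z
      rw [Algebra.smul_def, mul_comm]
      congr 1
      push_cast
      simp [map_add, map_natCast]
    rw [hx, hx, h]
  exact smul_right_injective B (by positivity : (n + 1 : ℚ) ≠ 0) h2

theorem ode_unique {g F G : B⟦X⟧} (hF : d⁄dX B F = g * F) (hG : d⁄dX B G = g * G)
    (h0 : coeff (R := B) 0 F = coeff (R := B) 0 G) : F = G := by
  ext k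
  induction k using Nat.strong_induction_on with
  | _ k ih =>
    match k with
    | 0 => exact h0
    | k+1 =>
      apply smul_cancel (n := k)
      have hF' := congrArg (coeff (R := B) k) hF
      have hG' := congrArg (coeff (R := B) k) hG
      rw [coeff_derivative] at hF' hG'
      rw [hF', hG', coeff_mul, coeff_mul]
      refine Finset.sum_congr rfl fun ij hij => ?_
      have h2 : ij.2 < k + 1 := Nat.lt_succ_of_le (Finset.HasAntidiagonal.antidiagonal.snd_le hij)
      rw [ih ij.2 h2]

theorem coeff_expPS' (p : B⟦X⟧) (k : ℕ) :
    coeff (R := B) k (expPS p) = ∑ m ∈ Finset.range (k + 1),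
      ((m.factorial : ℚ)⁻¹) • coeff (R := B) k (p ^ m) := coeff_mk _ _

theorem coeff_zero_expPS (p : B⟦X⟧) : coeff (R := B) 0 (expPS p) = 1 := by
  rw [coeff_expPS']
  simp

variable {A : Type*} [CommRing A] [Algebra ℚ A]

theorem constCoeff_mapCoeff_log (f : A →ₗ[ℚ] B) (a : A) :
    constantCoeff (R := B) (mapCoeff f (logOneAdd a)) = 0 := by
  rw [← coeff_zero_eq_constantCoeff_apply]
  simp [mapCoeff, logOneAdd]

theorem mapCoeff_add (f g : A →ₗ[ℚ] B) (p : PowerSeries A) :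
    mapCoeff (f + g) p = mapCoeff f p + mapCoeff g p := by
  ext k
  simp [mapCoeff]

theorem coeff_pow_zero_of_lt' {p : B⟦X⟧} (hp : constantCoeff (R := B) p = 0)
    {j m : ℕ} (h : j < m) : coeff (R := B) j (p ^ m) = 0 := by
  have hx : (X : B⟦X⟧) ^ m ∣ p ^ m := pow_dvd_pow_of_dvd (X_dvd_iff.mpr hp) m
  exact X_pow_dvd_iff.mp hx j h

theorem deriv_expPS {p : B⟦X⟧} (hp : constantCoeff (R := B) p = 0) :
    d⁄dX B (expPS p) = d⁄dX B p * expPS p := by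
  ext k
  rw [coeff_derivative, coeff_expPS']
  calc (∑ m ∈ Finset.range (k + 1 + 1), ((m.factorial : ℚ)⁻¹) • coeff (R := B) (k+1) (p ^ m)) * ((k:B)+1)
      = ∑ m ∈ Finset.range (k + 2), ((m.factorial : ℚ)⁻¹) • (coeff (R := B) k (d⁄dX B (p ^ m))) := by
        rw [Finset.sum_mul]
        refine Finset.sum_congr rfl fun m _ => ?_
        rw [smul_mul_assoc, coeff_derivative]
    _ = ∑ m ∈ Finset.range (k + 1), (((m+1).factorial : ℚ)⁻¹) • (coeff (R := B) k (d⁄dX B (p ^ (m+1)))) := by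
        rw [Finset.sum_range_succ']
        simp
    _ = ∑ m ∈ Finset.range (k + 1), ((m.factorial : ℚ)⁻¹) • coeff (R := B) k (d⁄dX B p * p ^ m) := by
        refine Finset.sum_congr rfl fun m _ => ?_
        rw [Derivation.leibniz_pow]
        simp only [Nat.add_sub_cancel, smul_eq_mul, map_nsmul]
        rw [← Nat.cast_smul_eq_nsmul ℚ, smul_smul]
        congr 1
        · rw [Nat.factorial_succ]
          push_cast
          rw [mul_inv]
          field_simp
        · rw [mul_comm]
    _ = ∑ m ∈ Finset.range (k + 1), ∑ ij ∈ Finset.HasAntidiagonal.antidiagonal k,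
          coeff (R := B) ij.1 (d⁄dX B p) * ((m.factorial : ℚ)⁻¹ • coeff (R := B) ij.2 (p ^ m)) := by
        refine Finset.sum_congr rfl fun m _ => ?_
        rw [coeff_mul, Finset.smul_sum]
        exact Finset.sum_congr rfl fun ij _ => (mul_smul_comm _ _ _).symm
    _ = ∑ ij ∈ Finset.HasAntidiagonal.antidiagonal k, coeff (R := B) ij.1 (d⁄dX B p) *
          ∑ m ∈ Finset.range (k + 1), ((m.factorial : ℚ)⁻¹) • coeff (R := B) ij.2 (p ^ m) := by
        rw [Finset.sum_comm]
        exact Finset.sum_congr rfl fun ij _ => (Finset.mul_sum _ _ _).symm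
    _ = coeff (R := B) k (d⁄dX B p * expPS p) := by
        rw [coeff_mul]
        refine Finset.sum_congr rfl fun ij hij => ?_
        rw [coeff_expPS']
        congr 1
        refine (Finset.sum_subset ?_ ?_).symm
        · intro m hm
          simp only [Finset.mem_range] at *
          have := Finset.HasAntidiagonal.antidiagonal.snd_le hij
          omega
        · intro m hm hm2
          simp only [Finset.mem_range, not_lt] at hm2
          rw [coeff_pow_zero_of_lt' hp hm2, smul_zero]

theorem charFun_add (f g : A →ₗ[ℚ] B) (a : A) :
    charFun (f + g) a = charFun f a * charFun g a := by
  set Lf := mapCoeff f (logOneAdd a) with hLf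
  set Lg := mapCoeff g (logOneAdd a) with hLg
  have hcf : constantCoeff (R := B) Lf = 0 := constCoeff_mapCoeff_log f a
  have hcg : constantCoeff (R := B) Lg = 0 := constCoeff_mapCoeff_log g a
  have hsum : constantCoeff (R := B) (Lf + Lg) = 0 := by rw [map_add, hcf, hcg, add_zero]
  show expPS (mapCoeff (f + g) (logOneAdd a)) = expPS Lf * expPS Lg
  rw [mapCoeff_add, ← hLf, ← hLg]
  refine ode_unique (g := d⁄dX B (Lf + Lg)) (deriv_expPS hsum) ?_ ?_
  · rw [Derivation.leibniz, smul_eq_mul, smul_eq_mul, deriv_expPS hcf, deriv_expPS hcg, map_add]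
    ring
  · have h2 : constantCoeff (R := B) (expPS Lf * expPS Lg) = 1 := by
      rw [map_mul, ← coeff_zero_eq_constantCoeff_apply, ← coeff_zero_eq_constantCoeff_apply,
        coeff_zero_expPS, coeff_zero_expPS, one_mul]
    rw [coeff_zero_expPS, coeff_zero_eq_constantCoeff_apply, h2]

theorem charFun_zero (a : A) : charFun (0 : A →ₗ[ℚ] B) a = 1 := by
  have h : mapCoeff (0 : A →ₗ[ℚ] B) (logOneAdd a) = 0 := by
    ext k; simp [mapCoeff]
  show expPS (mapCoeff (0 : A →ₗ[ℚ] B) (logOneAdd a)) = 1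
  rw [h]
  refine ode_unique (g := 0) ?_ ?_ ?_
  · rw [deriv_expPS (by simp), map_zero]
  · simp
  · simp [coeff_zero_expPS]

theorem charFun_nsmul (f : A →ₗ[ℚ] B) (a : A) (n : ℕ) :
    charFun (n • f) a = charFun f a ^ n := by
  induction n with
  | zero => simpa using charFun_zero a
  | succ n ih => rw [succ_nsmul, charFun_add, ih, pow_succ]

theorem coeff_dlog (b : B) (k : ℕ) :
    coeff (R := B) k (d⁄dX B (logOneAdd b)) = ((-1 : ℚ) ^ k) • b ^ (k + 1) := by
  rw [coeff_derivative]
  simp only [logOneAdd, coeff_mk]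
  have h1 : ((k : B) + 1) = algebraMap ℚ B ((k : ℚ) + 1) := by
    simp [map_add, map_natCast]
  rw [h1, mul_comm, ← Algebra.smul_def, smul_smul]
  congr 1
  have hk : ((k : ℚ) + 1) ≠ 0 := by positivity
  push_cast
  field_simp
  ring

theorem dlog_mul (b : B) :
    d⁄dX B (logOneAdd b) * (1 + C (R := B) b * X) = C (R := B) b := by
  ext k
  rw [mul_add, mul_one, map_add, ← mul_assoc]
  match k with
  | 0 =>
    rw [coeff_zero_mul_X, add_zero, coeff_dlog, coeff_zero_C]
    simp
  | k + 1 =>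
    rw [coeff_succ_mul_X, coeff_mul_C, coeff_dlog, coeff_dlog, coeff_C]
    simp only [Nat.succ_ne_zero, if_false]
    rw [smul_mul_assoc, ← pow_succ]
    rw [pow_succ, mul_comm ((-1:ℚ)^k) (-1), neg_one_mul, neg_smul]
    ring_nf

theorem expPS_log (b : B) : expPS (logOneAdd b) = 1 + C (R := B) b * X := by
  have hc : constantCoeff (R := B) (logOneAdd b) = 0 := by
    rw [← coeff_zero_eq_constantCoeff_apply]
    simp [logOneAdd]
  refine ode_unique (g := d⁄dX B (logOneAdd b)) (deriv_expPS hc) ?_ ?_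
  · have h1 : d⁄dX B ((1 : B⟦X⟧) + C (R := B) b * X) = C (R := B) b := by
      rw [map_add, Derivation.leibniz, derivative_X, derivative_C]
      simp
    rw [h1, dlog_mul]
  · rw [coeff_zero_expPS]
    simp

theorem charFun_ringHom (g : A →+* B) (a : A) :
    charFun (g.toRatAlgHom.toLinearMap) a = 1 + C (R := B) (g a) * X := by
  have h : mapCoeff (g.toRatAlgHom.toLinearMap) (logOneAdd a) = logOneAdd (g a) := by
    ext k
    simp [mapCoeff, logOneAdd, map_smul, map_pow, RingHom.toRatAlgHom]
  show expPS _ = _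
  rw [h, expPS_log]

theorem charFun_sum {ι : Type*} (s : Finset ι) (g : ι → (A →ₗ[ℚ] B)) (a : A) :
    charFun (∑ i ∈ s, g i) a = ∏ i ∈ s, charFun (g i) a := by
  classical
  induction s using Finset.induction_on with
  | empty => simpa using charFun_zero a
  | insert _ _ hi ih =>
    rw [Finset.sum_insert hi, Finset.prod_insert hi, charFun_add, ih]

end Aux

/-- for ring homomorphisms `(f_α)`, integers `(n_α)` indexed by a finite
set, and `f = Σ_α n_α·f_α`, the characteristic function of `f` is the rational
function `∏_{n_α>0}(1+f_α(a)T)^{n_α} / ∏_{n_α<0}(1+f_α(a)T)^{−n_α}`; precisely,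
`R(f,a)·∏_{n_α<0}(1+f_α(a)T)^{−n_α} = ∏_{n_α≥0}(1+f_α(a)T)^{n_α}` in `B[[T]]`. -/
theorem stmt18 {A B : Type*} [CommRing A] [CommRing B] [Algebra ℚ A] [Algebra ℚ B]
    {I : Type*} [Fintype I] (fα : I → (A →+* B)) (nα : I → ℤ)
    (f : A →ₗ[ℚ] B) (hf : f = ∑ α : I, nα α • ((fα α).toRatAlgHom.toLinearMap))
    (a : A) :
    charFun f a *
        ∏ α ∈ Finset.univ.filter (fun α => nα α < 0),
          (1 + PowerSeries.C (R := B) (fα α a) * PowerSeries.X) ^ (-nα α).toNat =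
      ∏ α ∈ Finset.univ.filter (fun α => 0 ≤ nα α),
        (1 + PowerSeries.C (R := B) (fα α a) * PowerSeries.X) ^ (nα α).toNat := by

  classical
  set L : I → (A →ₗ[ℚ] B) := fun α => (fα α).toRatAlgHom.toLinearMap with hL
  set P := Finset.univ.filter (fun α => 0 ≤ nα α) with hP
  set N := Finset.univ.filter (fun α => nα α < 0) with hN
  have hNP : Finset.univ.filter (fun α => ¬ 0 ≤ nα α) = N := by
    rw [hN]
    exact Finset.filter_congr fun x _ => by rw [not_le]
  have key : f + ∑ α ∈ N, ((-nα α).toNat) • L α = ∑ α ∈ P, ((nα α).toNat) • L α := by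
    rw [hf, ← Finset.sum_filter_add_sum_filter_not Finset.univ (fun α => 0 ≤ nα α), hNP, ← hP,
      add_assoc, ← Finset.sum_add_distrib]
    have hNzero : ∑ α ∈ N, (nα α • L α + ((-nα α).toNat) • L α) = 0 := by
      refine Finset.sum_eq_zero fun α hα => ?_
      have hα' : nα α < 0 := by
        rw [hN] at hα
        simpa using (Finset.mem_filter.mp hα).2
      rw [← natCast_zsmul, Int.toNat_of_nonneg (by omega), ← add_zsmul]
      simp
    rw [hNzero, add_zero]
    refine Finset.sum_congr rfl fun α hα => ?_
    have hα' : 0 ≤ nα α := by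
      rw [hP] at hα
      simpa using (Finset.mem_filter.mp hα).2
    rw [← natCast_zsmul, Int.toNat_of_nonneg hα']
  calc charFun f a * ∏ α ∈ N, (1 + C (R := B) (fα α a) * X) ^ (-nα α).toNat
      = charFun f a * ∏ α ∈ N, charFun (((-nα α).toNat) • L α) a := by
        congr 1
        exact Finset.prod_congr rfl fun α _ => by rw [charFun_nsmul, hL, charFun_ringHom]
    _ = charFun f a * charFun (∑ α ∈ N, ((-nα α).toNat) • L α) a := by rw [charFun_sum]
    _ = charFun (f + ∑ α ∈ N, ((-nα α).toNat) • L α) a := (charFun_add _ _ _).symm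
    _ = charFun (∑ α ∈ P, ((nα α).toNat) • L α) a := by rw [key]
    _ = ∏ α ∈ P, charFun (((nα α).toNat) • L α) a := charFun_sum _ _ _
    _ = ∏ α ∈ P, (1 + C (R := B) (fα α a) * X) ^ (nα α).toNat :=
        Finset.prod_congr rfl fun α _ => by rw [charFun_nsmul, hL, charFun_ringHom]
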